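/- Let N ≥ 3, 0 < m < 1, σ > 0, and p = p_s(σ) = m(N+2σ+2)/(N-2). The curve Z = -((N+σ)/(N-2)) (mY + N-2) Y is an invariant curve (explicit trajectory) of the planar system Ẏ = -(N-2)Y - mY² - Z, Ż = (σ+2)Z + (p-m)YZ: that is, if Z(Y) = -((N+σ)/(N-2))(mY+N-2)Y, then along the vector field one has dZ/dY · (-(N-2)Y - mY² - Z(Y)) = (σ+2+(p-m)Y) Z(Y) for all Y where the first factor is nonzero. -/
import Mathlib


theorem explicit_invariant_curve (N : ℕ) (hN : 3 ≤ N) (m σ p : ℝ)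
    (hm0 : 0 < m) (hm1 : m < 1) (hσ : 0 < σ)
    (hp : p = m * ((N : ℝ) + 2 * σ + 2) / ((N : ℝ) - 2))
    (Zc : ℝ → ℝ)
    (hZc : ∀ Y : ℝ, Zc Y = -(((N : ℝ) + σ) / ((N : ℝ) - 2)) * (m * Y + ((N : ℝ) - 2)) * Y) :
    ∀ Y : ℝ, (-((N : ℝ) - 2) * Y - m * Y ^ 2 - Zc Y) ≠ 0 →
      deriv Zc Y * (-((N : ℝ) - 2) * Y - m * Y ^ 2 - Zc Y)
        = (σ + 2 + (p - m) * Y) * Zc Y := by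
  have hN2 : ((N : ℝ) - 2) ≠ 0 := by
    have : (3 : ℝ) ≤ (N : ℝ) := by exact_mod_cast hN
    nlinarith
  set c : ℝ := -(((N : ℝ) + σ) / ((N : ℝ) - 2)) with hc
  have hfun : Zc = fun Y => c * (m * Y ^ 2) + c * (((N : ℝ) - 2) * Y) := by
    funext Y; rw [hZc]; ring
  intro Y _
  have hd : HasDerivAt Zc (c * (m * (2 * Y)) + c * ((N : ℝ) - 2)) Y := by
    rw [hfun]
    have h1 : HasDerivAt (fun Y : ℝ => c * (m * Y ^ 2)) (c * (m * (2 * Y))) Y := by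
      have := ((hasDerivAt_pow 2 Y).const_mul m).const_mul c
      simpa using this
    have h2 : HasDerivAt (fun Y : ℝ => c * (((N : ℝ) - 2) * Y)) (c * ((N : ℝ) - 2)) Y := by
      have := ((hasDerivAt_id Y).const_mul ((N : ℝ) - 2)).const_mul c
      simpa using this
    exact h1.add h2
  rw [hd.deriv, hZc, hp, hc]
  field_simp
  ring
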